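/- Let a_1,...,a_n be positive canonical-form dyadic rational games and b_1,...,b_m negative ones, and let k = Σ l(a_i) − Σ r(b_i). Then the misère outcome of a_1 + ... + a_n + b_1 + ... + b_m is L^- if k < 0, N^- if k = 0, and R^- if k > 0. -/

import Mathlib

universe u

namespace SetTheory

/-- Pre-games, as in the older Mathlib (`SetTheory.PGame`, removed from Mathlib since). -/
inductive PGame : Type (u + 1)
  | mk : ∀ α β : Type u, (α → PGame) → (β → PGame) → PGame

namespace PGame

def LeftMoves : PGame → Type u
  | mk l _ _ _ => l

def RightMoves : PGame → Type u
  | mk _ r _ _ => r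

def moveLeft : ∀ g : PGame, LeftMoves g → PGame
  | mk _l _ L _ => L

def moveRight : ∀ g : PGame, RightMoves g → PGame
  | mk _ _r _ R => R

inductive IsOption : PGame → PGame → Prop
  | moveLeft {x : PGame} (i : x.LeftMoves) : IsOption (x.moveLeft i) x
  | moveRight {x : PGame} (i : x.RightMoves) : IsOption (x.moveRight i) x

instance : Zero PGame :=
  ⟨⟨PEmpty, PEmpty, PEmpty.elim, PEmpty.elim⟩⟩

def neg : PGame → PGame
  | ⟨l, r, L, R⟩ => ⟨r, l, fun i => neg (R i), fun i => neg (L i)⟩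

instance : Neg PGame :=
  ⟨neg⟩

noncomputable instance : Add PGame.{u} :=
  ⟨fun x y => by
    induction x generalizing y with | mk xl xr _ _ IHxl IHxr => _
    induction y with | mk yl yr yL yR IHyl IHyr => _
    have y := mk yl yr yL yR
    refine ⟨xl ⊕ yl, xr ⊕ yr, Sum.rec ?_ ?_, Sum.rec ?_ ?_⟩
    · exact fun i => IHxl i y
    · exact IHyl
    · exact fun i => IHxr i y
    · exact IHyr⟩

end PGame

end SetTheory

open SetTheory

namespace Misere

/-- `F` is a follower of `G`: reachable from `G` by a (possibly empty) sequence of moves. -/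
def Follower (F G : PGame) : Prop := Relation.ReflTransGen PGame.IsOption F G

def IsLeftEnd (G : PGame) : Prop := IsEmpty G.LeftMoves
def IsRightEnd (G : PGame) : Prop := IsEmpty G.RightMoves

/-- A dead left end: every follower (including itself) is a left end. -/
def DeadLeftEnd (G : PGame) : Prop := ∀ F, Follower F G → IsLeftEnd F
def DeadRightEnd (G : PGame) : Prop := ∀ F, Follower F G → IsRightEnd F
def DeadEnd (G : PGame) : Prop := DeadLeftEnd G ∨ DeadRightEnd G

/-- A game is dead-ending if every end follower is a dead end. -/
def DeadEnding (G : PGame) : Prop :=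
  ∀ F, Follower F G → (IsLeftEnd F → DeadLeftEnd F) ∧ (IsRightEnd F → DeadRightEnd F)

/-- The universe of dead-ending games. -/
def E : Set PGame := {G | DeadEnding G}

/-- `(misereWins G).1` : Left, moving first, wins `G` under misère play;
    `(misereWins G).2` : Right, moving first, wins `G` under misère play. -/
def misereWins : PGame → Prop × Prop
  | PGame.mk l r L R =>
      (IsEmpty l ∨ ∃ i, ¬ (misereWins (L i)).2,
       IsEmpty r ∨ ∃ j, ¬ (misereWins (R j)).1)

def LeftWinsGF (G : PGame) : Prop := (misereWins G).1
def RightWinsGF (G : PGame) : Prop := (misereWins G).2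

inductive MOutcome : Type
  | L | N | P | R
deriving DecidableEq

/-- Partial order on misère outcomes: `R` minimal, `L` maximal, `N` and `P` incomparable. -/
def MOutcome.le : MOutcome → MOutcome → Prop
  | .R, _ => True
  | _, .L => True
  | a, b => a = b

instance : LE MOutcome := ⟨MOutcome.le⟩

/-- The misère outcome of a game. -/
noncomputable def outcome (G : PGame) : MOutcome := by
  classical
  exact if LeftWinsGF G then (if RightWinsGF G then .N else .L)
        else (if RightWinsGF G then .R else .P)

/-- `G ≡ H (mod U)`. -/
def equivMod (U : Set PGame) (G H : PGame) : Prop :=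
  ∀ X ∈ U, outcome (G + X) = outcome (H + X)

/-- `G ≧ H (mod U)`. -/
def geMod (U : Set PGame) (G H : PGame) : Prop :=
  ∀ X ∈ U, outcome (H + X) ≤ outcome (G + X)

/-- `LeftChain G n`: there is a sequence of `n` consecutive Left moves from `G`
ending at the zero position. -/
inductive LeftChain : PGame → ℕ → Prop
  | zero (G : PGame) : IsLeftEnd G → IsRightEnd G → LeftChain G 0
  | succ (G : PGame) (i : G.LeftMoves) (n : ℕ) :
      LeftChain (G.moveLeft i) n → LeftChain G (n + 1)

inductive RightChain : PGame → ℕ → Prop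
  | zero (G : PGame) : IsLeftEnd G → IsRightEnd G → RightChain G 0
  | succ (G : PGame) (j : G.RightMoves) (n : ℕ) :
      RightChain (G.moveRight j) n → RightChain G (n + 1)

/-- Left-length: minimum number of consecutive Left moves needed to reach zero. -/
noncomputable def leftLength (G : PGame) : ℕ := sInf {n | LeftChain G n}

/-- Right-length: minimum number of consecutive Right moves needed to reach zero. -/
noncomputable def rightLength (G : PGame) : ℕ := sInf {n | RightChain G n}

/-- Normal-play canonical form of a nonnegative integer. -/
def natGame : ℕ → PGame
  | 0 => 0
  | n + 1 => PGame.mk PUnit PEmpty (fun _ => natGame n) PEmpty.elim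

/-- Normal-play canonical form of an integer (negatives are conjugates). -/
def intGame (n : ℤ) : PGame :=
  if 0 ≤ n then natGame n.toNat else -natGame (-n).toNat

/-- Normal-play canonical form of the dyadic rational `m / 2 ^ j`. -/
def dyadicGame : ℤ → ℕ → PGame
  | m, 0 => intGame m
  | m, j + 1 =>
      if m % 2 = 0 then dyadicGame (m / 2) j
      else PGame.mk PUnit PUnit (fun _ => dyadicGame ((m - 1) / 2) j)
            (fun _ => dyadicGame ((m + 1) / 2) j)

/-- The closure of dead ends: finite disjunctive sums of dead ends. -/
def DeadEndClosure : Set PGame :=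
  {G | ∃ l : List PGame, (∀ x ∈ l, DeadEnd x) ∧ G = l.sum}

end Misere


namespace SetTheory.PGame

theorem leftMoves_add : ∀ x y : PGame.{u}, (x + y).LeftMoves = (x.LeftMoves ⊕ y.LeftMoves)
  | ⟨_, _, _, _⟩, ⟨_, _, _, _⟩ => rfl

theorem rightMoves_add : ∀ x y : PGame.{u}, (x + y).RightMoves = (x.RightMoves ⊕ y.RightMoves)
  | ⟨_, _, _, _⟩, ⟨_, _, _, _⟩ => rfl

def toLeftMovesAdd {x y : PGame.{u}} : x.LeftMoves ⊕ y.LeftMoves ≃ (x + y).LeftMoves :=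
  Equiv.cast (leftMoves_add x y).symm

def toRightMovesAdd {x y : PGame.{u}} : x.RightMoves ⊕ y.RightMoves ≃ (x + y).RightMoves :=
  Equiv.cast (rightMoves_add x y).symm

theorem add_moveLeft_inl {x : PGame.{u}} (y : PGame.{u}) (i : x.LeftMoves) :
    (x + y).moveLeft (toLeftMovesAdd (Sum.inl i)) = x.moveLeft i + y := by
  cases x; cases y; rfl

theorem add_moveLeft_inr (x : PGame.{u}) {y : PGame.{u}} (i : y.LeftMoves) :
    (x + y).moveLeft (toLeftMovesAdd (Sum.inr i)) = x + y.moveLeft i := by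
  cases x; cases y; rfl

theorem add_moveRight_inl {x : PGame.{u}} (y : PGame.{u}) (i : x.RightMoves) :
    (x + y).moveRight (toRightMovesAdd (Sum.inl i)) = x.moveRight i + y := by
  cases x; cases y; rfl

theorem add_moveRight_inr (x : PGame.{u}) {y : PGame.{u}} (i : y.RightMoves) :
    (x + y).moveRight (toRightMovesAdd (Sum.inr i)) = x + y.moveRight i := by
  cases x; cases y; rfl

theorem pgame_neg_zero : -(0 : PGame.{u}) = 0 := by
  change neg (PGame.mk PEmpty PEmpty PEmpty.elim PEmpty.elim) =
    PGame.mk PEmpty PEmpty PEmpty.elim PEmpty.elim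
  rw [neg]
  congr 1 <;> funext i <;> exact i.elim

theorem pgame_neg_neg (x : PGame.{u}) : -(-x) = x := by
  induction x with
  | mk xl xr xL xR ihL ihR =>
    change neg (neg (mk xl xr xL xR)) = _
    rw [neg, neg]
    congr 1 <;> funext i
    · exact ihL i
    · exact ihR i

end SetTheory.PGame

namespace Misere

/-! ### Auxiliary development for stmt13 -/

open PGame

/-- Class of "positive canonical dyadic-like" games (or zero), with left-length `n`
and depth bound `d`. -/
inductive P : PGame.{u} → ℕ → ℕ → Prop where
  | zero (d : ℕ) : P 0 0 d
  | pos {xl xr : Type u} (xL : xl → PGame.{u}) (xR : xr → PGame.{u}) (n d : ℕ)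
      (m : xr → ℕ)
      (hne : Nonempty xl)
      (hL : ∀ i, P (xL i) n d)
      (hm : ∀ j, m j + 1 ≤ n + 1)
      (hR : ∀ j, P (xR j) (m j + 1) d) :
      P (PGame.mk xl xr xL xR) (n + 1) (d + 1)

/-- Mirror class: negative canonical dyadic-like games (or zero), with right-length `n`. -/
inductive N : PGame.{u} → ℕ → ℕ → Prop where
  | zero (d : ℕ) : N 0 0 d
  | neg {xl xr : Type u} (xL : xl → PGame.{u}) (xR : xr → PGame.{u}) (n d : ℕ)
      (m : xl → ℕ)
      (hne : Nonempty xr)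
      (hR : ∀ j, N (xR j) n d)
      (hm : ∀ i, m i + 1 ≤ n + 1)
      (hL : ∀ i, N (xL i) (m i + 1) d) :
      N (PGame.mk xl xr xL xR) (n + 1) (d + 1)

theorem P_mono : ∀ {G : PGame} {n d : ℕ}, P G n d → ∀ d', d ≤ d' → P G n d' := by
  intro G n d h
  induction h with
  | zero d => exact fun d' _ => P.zero d'
  | pos xL xR n d m hne hL hm hR ihL ihR =>
    intro d' hd'
    obtain ⟨e, rfl⟩ : ∃ e, d' = e + 1 := ⟨d' - 1, by omega⟩
    exact P.pos xL xR n e m hne (fun i => ihL i e (by omega)) hm (fun j => ihR j e (by omega))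

theorem pgame_neg_mk (xl xr : Type u) (xL : xl → PGame) (xR : xr → PGame) :
    -(PGame.mk xl xr xL xR) = PGame.mk xr xl (fun j => -xR j) (fun i => -xL i) := rfl

theorem N_neg : ∀ {G : PGame} {n d : ℕ}, P G n d → N (-G) n d := by
  intro G n d h
  induction h with
  | zero d => rw [pgame_neg_zero]; exact N.zero d
  | pos xL xR n d m hne hL hm hR ihL ihR =>
    rw [pgame_neg_mk]
    exact N.neg (fun j => -xR j) (fun i => -xL i) n d m hne ihL hm ihR

/-- Sum class with positive weight `p`, negative weight `q`, depth `d`. -/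
inductive S : PGame.{u} → ℕ → ℕ → ℕ → Prop where
  | pos (G : PGame.{u}) (n d : ℕ) : P G n d → S G n 0 d
  | neg (G : PGame.{u}) (n d : ℕ) : N G n d → S G 0 n d
  | add (G H : PGame.{u}) (p1 q1 d1 p2 q2 d2 : ℕ) :
      S G p1 q1 d1 → S H p2 q2 d2 → S (G + H) (p1 + p2) (q1 + q2) (d1 + d2 + 1)

theorem zero_no_left (i : (0 : PGame.{u}).LeftMoves) : False := PEmpty.elim i
theorem zero_no_right (i : (0 : PGame.{u}).RightMoves) : False := PEmpty.elim i

theorem S_moveLeft : ∀ {G : PGame} {p q d : ℕ}, S G p q d → ∀ i : G.LeftMoves,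
    ∃ p' q' d', d' < d ∧ S (G.moveLeft i) p' q' d' ∧
      ((p = p' + 1 ∧ q' = q) ∨ (p' = p ∧ q' ≤ q ∧ 1 ≤ q')) := by
  intro G p q d h
  induction h with
  | pos G n d hP =>
    cases hP with
    | zero d => exact fun i => (zero_no_left i).elim
    | pos xL xR n d m hne hL hm hR =>
      exact fun i => ⟨n, 0, d, Nat.lt_succ_self d, S.pos _ _ _ (hL i), Or.inl ⟨rfl, rfl⟩⟩
  | neg G n d hN =>
    cases hN with
    | zero d => exact fun i => (zero_no_left i).elim
    | neg xL xR n d m hne hR hm hL =>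
      exact fun i => ⟨0, m i + 1, d, Nat.lt_succ_self d, S.neg _ _ _ (hL i),
        Or.inr ⟨rfl, hm i, Nat.succ_le_succ (Nat.zero_le _)⟩⟩
  | add G H p1 q1 d1 p2 q2 d2 h1 h2 ih1 ih2 =>
    intro i
    obtain ⟨j, rfl⟩ : ∃ j, i = toLeftMovesAdd j := ⟨_, (toLeftMovesAdd.apply_symm_apply i).symm⟩
    cases j with
    | inl j =>
      rw [PGame.add_moveLeft_inl]
      obtain ⟨p', q', d', hd, hS, hc⟩ := ih1 j
      refine ⟨p' + p2, q' + q2, d' + d2 + 1, by omega, S.add _ _ _ _ _ _ _ _ hS h2, ?_⟩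
      rcases hc with ⟨e1, e2⟩ | ⟨e1, e2, e3⟩
      · exact Or.inl ⟨by omega, by omega⟩
      · exact Or.inr ⟨by omega, by omega, by omega⟩
    | inr j =>
      rw [PGame.add_moveLeft_inr]
      obtain ⟨p', q', d', hd, hS, hc⟩ := ih2 j
      refine ⟨p1 + p', q1 + q', d1 + d' + 1, by omega, S.add _ _ _ _ _ _ _ _ h1 hS, ?_⟩
      rcases hc with ⟨e1, e2⟩ | ⟨e1, e2, e3⟩
      · exact Or.inl ⟨by omega, by omega⟩
      · exact Or.inr ⟨by omega, by omega, by omega⟩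

theorem S_moveRight : ∀ {G : PGame} {p q d : ℕ}, S G p q d → ∀ j : G.RightMoves,
    ∃ p' q' d', d' < d ∧ S (G.moveRight j) p' q' d' ∧
      ((q = q' + 1 ∧ p' = p) ∨ (q' = q ∧ p' ≤ p ∧ 1 ≤ p')) := by
  intro G p q d h
  induction h with
  | pos G n d hP =>
    cases hP with
    | zero d => exact fun i => (zero_no_right i).elim
    | pos xL xR n d m hne hL hm hR =>
      exact fun j => ⟨m j + 1, 0, d, Nat.lt_succ_self d, S.pos _ _ _ (hR j),
        Or.inr ⟨rfl, hm j, Nat.succ_le_succ (Nat.zero_le _)⟩⟩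
  | neg G n d hN =>
    cases hN with
    | zero d => exact fun i => (zero_no_right i).elim
    | neg xL xR n d m hne hR hm hL =>
      exact fun j => ⟨0, n, d, Nat.lt_succ_self d, S.neg _ _ _ (hR j), Or.inl ⟨rfl, rfl⟩⟩
  | add G H p1 q1 d1 p2 q2 d2 h1 h2 ih1 ih2 =>
    intro i
    obtain ⟨j, rfl⟩ : ∃ j, i = toRightMovesAdd j := ⟨_, (toRightMovesAdd.apply_symm_apply i).symm⟩
    cases j with
    | inl j =>
      rw [PGame.add_moveRight_inl]
      obtain ⟨p', q', d', hd, hS, hc⟩ := ih1 j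
      refine ⟨p' + p2, q' + q2, d' + d2 + 1, by omega, S.add _ _ _ _ _ _ _ _ hS h2, ?_⟩
      rcases hc with ⟨e1, e2⟩ | ⟨e1, e2, e3⟩
      · exact Or.inl ⟨by omega, by omega⟩
      · exact Or.inr ⟨by omega, by omega, by omega⟩
    | inr j =>
      rw [PGame.add_moveRight_inr]
      obtain ⟨p', q', d', hd, hS, hc⟩ := ih2 j
      refine ⟨p1 + p', q1 + q', d1 + d' + 1, by omega, S.add _ _ _ _ _ _ _ _ h1 hS, ?_⟩
      rcases hc with ⟨e1, e2⟩ | ⟨e1, e2, e3⟩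
      · exact Or.inl ⟨by omega, by omega⟩
      · exact Or.inr ⟨by omega, by omega, by omega⟩

theorem S_exists_left : ∀ {G : PGame} {p q d : ℕ}, S G p q d → 0 < p →
    ∃ (i : G.LeftMoves) (p' d' : ℕ), p' + 1 = p ∧ d' < d ∧ S (G.moveLeft i) p' q d' := by
  intro G p q d h
  induction h with
  | pos G n d hP =>
    intro hp
    cases hP with
    | zero d => omega
    | pos xL xR n d m hne hL hm hR =>
      obtain ⟨i⟩ := hne
      exact ⟨i, n, d, rfl, Nat.lt_succ_self d, S.pos _ _ _ (hL i)⟩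
  | neg G n d hN => intro hp; omega
  | add G H p1 q1 d1 p2 q2 d2 h1 h2 ih1 ih2 =>
    intro hp
    rcases Nat.eq_zero_or_pos p1 with h0 | hpos
    · have hp2 : 0 < p2 := by omega
      obtain ⟨i, p', d', he, hd, hS⟩ := ih2 hp2
      refine ⟨toLeftMovesAdd (Sum.inr i), p1 + p', d1 + d' + 1, by omega, by omega, ?_⟩
      rw [PGame.add_moveLeft_inr]
      exact S.add _ _ _ _ _ _ _ _ h1 hS
    · obtain ⟨i, p', d', he, hd, hS⟩ := ih1 hpos
      refine ⟨toLeftMovesAdd (Sum.inl i), p' + p2, d' + d2 + 1, by omega, by omega, ?_⟩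
      rw [PGame.add_moveLeft_inl]
      exact S.add _ _ _ _ _ _ _ _ hS h2

theorem S_exists_right : ∀ {G : PGame} {p q d : ℕ}, S G p q d → 0 < q →
    ∃ (j : G.RightMoves) (q' d' : ℕ), q' + 1 = q ∧ d' < d ∧ S (G.moveRight j) p q' d' := by
  intro G p q d h
  induction h with
  | pos G n d hP => intro hq; omega
  | neg G n d hN =>
    intro hq
    cases hN with
    | zero d => omega
    | neg xL xR n d m hne hR hm hL =>
      obtain ⟨j⟩ := hne
      exact ⟨j, n, d, rfl, Nat.lt_succ_self d, S.neg _ _ _ (hR j)⟩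
  | add G H p1 q1 d1 p2 q2 d2 h1 h2 ih1 ih2 =>
    intro hq
    rcases Nat.eq_zero_or_pos q1 with h0 | hpos
    · have hq2 : 0 < q2 := by omega
      obtain ⟨j, q', d', he, hd, hS⟩ := ih2 hq2
      refine ⟨toRightMovesAdd (Sum.inr j), q1 + q', d1 + d' + 1, by omega, by omega, ?_⟩
      rw [PGame.add_moveRight_inr]
      exact S.add _ _ _ _ _ _ _ _ h1 hS
    · obtain ⟨j, q', d', he, hd, hS⟩ := ih1 hpos
      refine ⟨toRightMovesAdd (Sum.inl j), q' + q2, d' + d2 + 1, by omega, by omega, ?_⟩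
      rw [PGame.add_moveRight_inl]
      exact S.add _ _ _ _ _ _ _ _ hS h2

theorem S_left_end {G : PGame} {p q d : ℕ} (h : S G p q d) (he : IsEmpty G.LeftMoves) :
    p = 0 := by
  by_contra hp
  obtain ⟨i, _, _, _, _, _⟩ := S_exists_left h (Nat.pos_of_ne_zero hp)
  exact he.false i

theorem S_right_end {G : PGame} {p q d : ℕ} (h : S G p q d) (he : IsEmpty G.RightMoves) :
    q = 0 := by
  by_contra hq
  obtain ⟨j, _, _, _, _, _⟩ := S_exists_right h (Nat.pos_of_ne_zero hq)
  exact he.false j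

theorem leftWinsGF_iff (G : PGame) :
    LeftWinsGF G ↔ IsEmpty G.LeftMoves ∨ ∃ i, ¬ RightWinsGF (G.moveLeft i) := by
  cases G with
  | mk l r L R => exact Iff.rfl

theorem rightWinsGF_iff (G : PGame) :
    RightWinsGF G ↔ IsEmpty G.RightMoves ∨ ∃ j, ¬ LeftWinsGF (G.moveRight j) := by
  cases G with
  | mk l r L R => exact Iff.rfl

/-- The main characterization: on the class `S`, Left wins going first iff `p ≤ q`,
and Right wins going first iff `q ≤ p`. -/
theorem main : ∀ (d : ℕ) (G : PGame) (p q : ℕ), S G p q d →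
    (LeftWinsGF G ↔ p ≤ q) ∧ (RightWinsGF G ↔ q ≤ p) := by
  intro d
  induction d using Nat.strong_induction_on with
  | _ d ih =>
  intro G p q h
  constructor
  · rw [leftWinsGF_iff]
    constructor
    · rintro (he | ⟨i, hi⟩)
      · have := S_left_end h he; omega
      · obtain ⟨p', q', d', hd, hS, hc⟩ := S_moveLeft h i
        have hiff := ((ih d' hd) _ _ _ hS).2
        have : ¬ q' ≤ p' := fun hle => hi (hiff.mpr hle)
        omega
    · intro hpq
      by_cases he : IsEmpty G.LeftMoves
      · exact Or.inl he
      · right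
        rcases Nat.eq_zero_or_pos p with hp | hp
        · obtain ⟨i⟩ := not_isEmpty_iff.mp he
          obtain ⟨p', q', d', hd, hS, hc⟩ := S_moveLeft h i
          refine ⟨i, fun hr => ?_⟩
          have hiff := ((ih d' hd) _ _ _ hS).2
          have := hiff.mp hr
          omega
        · obtain ⟨i, p', d', he', hd, hS⟩ := S_exists_left h hp
          refine ⟨i, fun hr => ?_⟩
          have hiff := ((ih d' hd) _ _ _ hS).2
          have := hiff.mp hr
          omega
  · rw [rightWinsGF_iff]
    constructor
    · rintro (he | ⟨j, hj⟩)
      · have := S_right_end h he; omega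
      · obtain ⟨p', q', d', hd, hS, hc⟩ := S_moveRight h j
        have hiff := ((ih d' hd) _ _ _ hS).1
        have : ¬ p' ≤ q' := fun hle => hj (hiff.mpr hle)
        omega
    · intro hpq
      by_cases he : IsEmpty G.RightMoves
      · exact Or.inl he
      · right
        rcases Nat.eq_zero_or_pos q with hq | hq
        · obtain ⟨j⟩ := not_isEmpty_iff.mp he
          obtain ⟨p', q', d', hd, hS, hc⟩ := S_moveRight h j
          refine ⟨j, fun hl => ?_⟩
          have hiff := ((ih d' hd) _ _ _ hS).1
          have := hiff.mp hl
          omega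
        · obtain ⟨j, q', d', he', hd, hS⟩ := S_exists_right h hq
          refine ⟨j, fun hl => ?_⟩
          have hiff := ((ih d' hd) _ _ _ hS).1
          have := hiff.mp hl
          omega

end Misere
namespace Misere
open PGame

/-- Left-length of `dyadicGame m j` (for `m ≥ 0`), computed recursively. -/
def llen : ℤ → ℕ → ℕ
  | m, 0 => m.toNat
  | m, j + 1 => if m % 2 = 0 then llen (m / 2) j else llen ((m - 1) / 2) j + 1

theorem llen_pos : ∀ (j : ℕ) (m : ℤ), 0 < m → 1 ≤ llen m j := by
  intro j
  induction j with
  | zero => intro m hm; simp [llen]; omega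
  | succ j ih =>
    intro m hm
    by_cases h2 : m % 2 = 0
    · rw [llen, if_pos h2]; exact ih _ (by omega)
    · rw [llen, if_neg h2]; omega

theorem llen_succ_le : ∀ (j : ℕ) (u : ℤ), 0 ≤ u → llen (u + 1) j ≤ llen u j + 1 := by
  intro j
  induction j with
  | zero => intro u hu; simp only [llen]; omega
  | succ j ih =>
    intro u hu
    by_cases h2 : u % 2 = 0
    · have h1 : (u + 1) % 2 ≠ 0 := by omega
      rw [llen, if_neg h1, llen, if_pos h2]
      have : (u + 1 - 1) / 2 = u / 2 := by omega
      rw [this]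
    · have h1 : (u + 1) % 2 = 0 := by omega
      rw [llen, if_pos h1, llen, if_neg h2]
      have e1 : (u + 1) / 2 = (u - 1) / 2 + 1 := by omega
      rw [e1]
      have := ih ((u - 1) / 2) (by omega)
      omega

theorem P_natGame : ∀ n : ℕ, P (natGame n) n n := by
  intro n
  induction n with
  | zero => exact P.zero 0
  | succ n ih =>
    rw [natGame]
    exact P.pos _ _ n n PEmpty.elim ⟨PUnit.unit⟩ (fun _ => ih)
      (fun j => j.elim) (fun j => j.elim)

theorem P_dyadic : ∀ (j : ℕ) (m : ℤ), 0 ≤ m → ∃ d, P (dyadicGame m j) (llen m j) d := by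
  intro j
  induction j with
  | zero =>
    intro m hm
    rw [dyadicGame, intGame, if_pos hm]
    exact ⟨m.toNat, P_natGame m.toNat⟩
  | succ j ih =>
    intro m hm
    by_cases h2 : m % 2 = 0
    · rw [dyadicGame, if_pos h2, llen, if_pos h2]
      exact ih _ (by omega)
    · rw [dyadicGame, if_neg h2, llen, if_neg h2]
      obtain ⟨d1, h1⟩ := ih ((m - 1) / 2) (by omega)
      obtain ⟨d2, h2'⟩ := ih ((m + 1) / 2) (by omega)
      have hpos : 1 ≤ llen ((m + 1) / 2) j := llen_pos j _ (by omega)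
      have hle : llen ((m + 1) / 2) j ≤ llen ((m - 1) / 2) j + 1 := by
        have e1 : (m + 1) / 2 = (m - 1) / 2 + 1 := by omega
        rw [e1]
        exact llen_succ_le j _ (by omega)
      refine ⟨max d1 d2 + 1, ?_⟩
      refine P.pos _ _ _ (max d1 d2) (fun _ => llen ((m + 1) / 2) j - 1) ⟨PUnit.unit⟩
        (fun _ => P_mono h1 _ (le_max_left _ _))
        (fun _ => by show llen ((m + 1) / 2) j - 1 + 1 ≤ llen ((m - 1) / 2) j + 1; omega)
        (fun _ => ?_)
      show P (dyadicGame ((m + 1) / 2) j) (llen ((m + 1) / 2) j - 1 + 1) (max d1 d2)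
      have e : llen ((m + 1) / 2) j - 1 + 1 = llen ((m + 1) / 2) j := by omega
      rw [e]
      exact P_mono h2' _ (le_max_right _ _)

theorem isLeftEnd_zero : IsLeftEnd (0 : PGame) := ⟨fun i => zero_no_left i⟩
theorem isRightEnd_zero : IsRightEnd (0 : PGame) := ⟨fun i => zero_no_right i⟩

theorem leftChain_natGame : ∀ (k : ℕ) (n : ℕ), LeftChain (natGame k) n ↔ n = k := by
  intro k
  induction k with
  | zero =>
    intro n
    constructor
    · intro h
      cases h with
      | zero _ _ _ => rfl
      | succ _ i _ _ => exact (zero_no_left i).elim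
    · rintro rfl; exact LeftChain.zero _ isLeftEnd_zero isRightEnd_zero
  | succ k ih =>
    intro n
    rw [natGame]
    constructor
    · intro h
      cases h with
      | zero _ hl _ => exact (hl.false PUnit.unit).elim
      | succ _ i n' h' => rw [(ih n').mp h']
    · rintro rfl
      exact LeftChain.succ _ (by exact PUnit.unit) k ((ih k).mpr rfl)

theorem leftChain_dyadic : ∀ (j : ℕ) (m : ℤ), 0 ≤ m → ∀ n : ℕ,
    (LeftChain (dyadicGame m j) n ↔ n = llen m j) := by
  intro j
  induction j with
  | zero =>
    intro m hm n
    rw [dyadicGame, intGame, if_pos hm, llen]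
    exact leftChain_natGame m.toNat n
  | succ j ih =>
    intro m hm n
    by_cases h2 : m % 2 = 0
    · rw [dyadicGame, if_pos h2, llen, if_pos h2]
      exact ih _ (by omega) n
    · rw [dyadicGame, if_neg h2, llen, if_neg h2]
      constructor
      · intro h
        cases h with
        | zero _ hl _ => exact (hl.false PUnit.unit).elim
        | succ _ i n' h' => rw [(ih _ (by omega) n').mp h']
      · rintro rfl
        exact LeftChain.succ _ (by exact PUnit.unit) _ ((ih _ (by omega) _).mpr rfl)

theorem leftLength_dyadic (m : ℤ) (j : ℕ) (hm : 0 ≤ m) :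
    leftLength (dyadicGame m j) = llen m j := by
  have hset : {n | LeftChain (dyadicGame m j) n} = {llen m j} := by
    ext n
    simpa [Set.mem_setOf_eq] using leftChain_dyadic j m hm n
  rw [leftLength, hset, csInf_singleton]

theorem dyadic_neg : ∀ (j : ℕ) (m : ℤ), dyadicGame (-m) j = -dyadicGame m j := by
  intro j
  induction j with
  | zero =>
    intro m
    rcases lt_trichotomy m 0 with hm | hm | hm
    · rw [dyadicGame, dyadicGame, intGame, intGame, if_pos (by omega : (0:ℤ) ≤ -m),
        if_neg (by omega), pgame_neg_neg]
    · subst hm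
      have h0 : dyadicGame 0 0 = 0 := by
        rw [dyadicGame, intGame, if_pos le_rfl]; rfl
      rw [neg_zero, h0, pgame_neg_zero]
    · rw [dyadicGame, dyadicGame, intGame, intGame, if_neg (by omega), if_pos (by omega), neg_neg]
  | succ j ih =>
    intro m
    by_cases h2 : m % 2 = 0
    · have h2' : (-m) % 2 = 0 := by omega
      rw [dyadicGame, if_pos h2', dyadicGame, if_pos h2,
        show (-m) / 2 = -(m / 2) by omega]
      exact ih _
    · have h2' : ¬ (-m) % 2 = 0 := by omega
      rw [dyadicGame, if_neg h2', dyadicGame, if_neg h2, pgame_neg_mk]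
      congr 1
      · funext _
        rw [show (-m - 1) / 2 = -((m + 1) / 2) by omega]
        exact ih _
      · funext _
        rw [show (-m + 1) / 2 = -((m - 1) / 2) by omega]
        exact ih _

theorem rightChain_neg : ∀ {G : PGame} {n : ℕ}, LeftChain G n → RightChain (-G) n := by
  intro G n h
  induction h with
  | zero G hl hr =>
    cases G with
    | mk l r L R => exact RightChain.zero _ hr hl
  | succ G i k h ih =>
    cases G with
    | mk l r L R =>
      rw [pgame_neg_mk]
      have ih' : RightChain ((PGame.mk r l (fun j => -R j) (fun i => -L i)).moveRight i) k := ih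
      exact RightChain.succ _ (by exact i) k ih'

theorem leftChain_neg : ∀ {G : PGame} {n : ℕ}, RightChain G n → LeftChain (-G) n := by
  intro G n h
  induction h with
  | zero G hl hr =>
    cases G with
    | mk l r L R => exact LeftChain.zero _ hr hl
  | succ G j k h ih =>
    cases G with
    | mk l r L R =>
      rw [pgame_neg_mk]
      have ih' : LeftChain ((PGame.mk r l (fun j => -R j) (fun i => -L i)).moveLeft j) k := ih
      exact LeftChain.succ _ (by exact j) k ih'

theorem rightLength_dyadic (m : ℤ) (j : ℕ) (hm : m ≤ 0) :
    rightLength (dyadicGame m j) = llen (-m) j := by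
  have hG : dyadicGame m j = -dyadicGame (-m) j := by
    rw [← dyadic_neg, neg_neg]
  have hset : {n | RightChain (dyadicGame m j) n} = {n | LeftChain (dyadicGame (-m) j) n} := by
    ext n
    constructor
    · intro h
      have := leftChain_neg h
      rw [hG, pgame_neg_neg] at this
      exact this
    · intro h
      rw [hG]
      exact rightChain_neg h
  have hset2 : {n | LeftChain (dyadicGame (-m) j) n} = {llen (-m) j} := by
    ext n
    simpa [Set.mem_setOf_eq] using leftChain_dyadic j (-m) (by omega) n
  rw [rightLength, hset, hset2, csInf_singleton]

theorem S_sum_pos : ∀ (l : List (ℤ × ℕ)), (∀ p ∈ l, 0 < p.1) →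
    ∃ d, S ((l.map fun p => dyadicGame p.1 p.2).sum)
      ((l.map fun p => leftLength (dyadicGame p.1 p.2)).sum) 0 d := by
  intro l
  induction l with
  | nil => exact fun _ => ⟨0, S.pos _ _ _ (P.zero 0)⟩
  | cons a t ih =>
    intro h
    have ha : 0 < a.1 := h a (List.mem_cons_self)
    obtain ⟨d1, h1⟩ := P_dyadic a.2 a.1 (by omega)
    rw [← leftLength_dyadic a.1 a.2 (by omega)] at h1
    obtain ⟨d2, h2⟩ := ih (fun p hp => h p (List.mem_cons_of_mem a hp))
    refine ⟨d1 + d2 + 1, ?_⟩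
    simp only [List.map_cons, List.sum_cons]
    have := S.add _ _ _ _ _ _ _ _ (S.pos _ _ _ h1) h2
    simpa using this

theorem S_sum_neg : ∀ (l : List (ℤ × ℕ)), (∀ p ∈ l, p.1 < 0) →
    ∃ d, S ((l.map fun p => dyadicGame p.1 p.2).sum) 0
      ((l.map fun p => rightLength (dyadicGame p.1 p.2)).sum) d := by
  intro l
  induction l with
  | nil => exact fun _ => ⟨0, S.neg _ _ _ (N.zero 0)⟩
  | cons a t ih =>
    intro h
    have ha : a.1 < 0 := h a (List.mem_cons_self)
    obtain ⟨d1, h1⟩ := P_dyadic a.2 (-a.1) (by omega)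
    have hN : N (dyadicGame a.1 a.2) (llen (-a.1) a.2) d1 := by
      have := N_neg h1
      rw [← dyadic_neg, neg_neg] at this
      exact this
    rw [← rightLength_dyadic a.1 a.2 (by omega)] at hN
    obtain ⟨d2, h2⟩ := ih (fun p hp => h p (List.mem_cons_of_mem a hp))
    refine ⟨d1 + d2 + 1, ?_⟩
    simp only [List.map_cons, List.sum_cons]
    have := S.add _ _ _ _ _ _ _ _ (S.neg _ _ _ hN) h2
    simpa using this

end Misere

open Misere SetTheory PGame

/-- the misère outcome of a sum of positive and negative canonical-form
dyadic rationals is determined by k = Σ l(aᵢ) − Σ r(bᵢ). -/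
theorem stmt13 (as bs : List (ℤ × ℕ))
    (ha : ∀ p ∈ as, 0 < p.1) (hb : ∀ p ∈ bs, p.1 < 0) :
    let G := (as.map fun p => dyadicGame p.1 p.2).sum +
             (bs.map fun p => dyadicGame p.1 p.2).sum
    let k : ℤ := (as.map fun p => (leftLength (dyadicGame p.1 p.2) : ℤ)).sum -
                 (bs.map fun p => (rightLength (dyadicGame p.1 p.2) : ℤ)).sum
    (k < 0 → outcome G = MOutcome.L) ∧
    (k = 0 → outcome G = MOutcome.N) ∧
    (0 < k → outcome G = MOutcome.R) := by
  intro G k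
  obtain ⟨d1, hA⟩ := S_sum_pos as ha
  obtain ⟨d2, hB⟩ := S_sum_neg bs hb
  have hS := S.add _ _ _ _ _ _ _ _ hA hB
  rw [Nat.add_zero, Nat.zero_add] at hS
  have hmain := main _ _ _ _ hS
  have hk : k = ((as.map fun p => leftLength (dyadicGame p.1 p.2)).sum : ℤ)
      - ((bs.map fun p => rightLength (dyadicGame p.1 p.2)).sum : ℤ) := by
    show ((as.map fun p => (leftLength (dyadicGame p.1 p.2) : ℤ)).sum
        - (bs.map fun p => (rightLength (dyadicGame p.1 p.2) : ℤ)).sum) = _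
    rw [Nat.cast_list_sum, Nat.cast_list_sum, List.map_map, List.map_map]
    rfl
  refine ⟨fun h => ?_, fun h => ?_, fun h => ?_⟩ <;> rw [hk] at h <;> unfold outcome
  · rw [if_pos (hmain.1.mpr (by omega)),
      if_neg (fun hr => absurd (hmain.2.mp hr) (by omega))]
  · rw [if_pos (hmain.1.mpr (by omega)), if_pos (hmain.2.mpr (by omega))]
  · rw [if_neg (fun hl => absurd (hmain.1.mp hl) (by omega)),
      if_pos (hmain.2.mpr (by omega))]
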